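/- If rational numbers X, Y, Z, T, U (from a rational solution to the four-distance problem, i.e., distances to the corners of a square with rational side T, satisfying equations (1) and (2)) arise from a point (x,y) with v_3(x) < 0 or v_3(y) < 0 and v_3(x) ≠ v_3(y), then v_3(X) = v_3(Y) = v_3(Z) = v_3(U) = min{v_3(x), v_3(y)} < v_3(T). -/

import Mathlib

private lemma v3_zero_of_cases : ∀ c : ℚ, c = -(1/2) ∨ c = 1/2 ∨ c = -1 →
    padicValRat 3 c = 0 := by
  rintro c (rfl | rfl | rfl)
  · rw [padicValRat.neg]; norm_num [padicValRat]
  · norm_num [padicValRat]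
  · simp

/-- Valuation of a shifted element when the shift has valuation 0. -/
private lemma v3_shift {a c : ℚ} (hc : padicValRat 3 c = 0)
    (ha : padicValRat 3 a < 0) : padicValRat 3 (a + c) = padicValRat 3 a := by
  have ha0 : a ≠ 0 := by rintro rfl; simp [padicValRat.zero] at ha
  rcases eq_or_ne c 0 with rfl | hc0
  · simp
  have hs : a + c ≠ 0 := by
    intro h
    have : c = -a := by linarith [h]
    rw [this, padicValRat.neg] at hc
    omega
  exact padicValRat.add_eq_of_lt hs ha0 hc0 (by omega)

/-- Lower bound for the valuation of a shifted element. -/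
private lemma v3_shift_ge {a c : ℚ} (hc : padicValRat 3 c = 0)
    (hs : a + c ≠ 0) : min (padicValRat 3 a) 0 ≤ padicValRat 3 (a + c) := by
  have := padicValRat.min_le_padicValRat_add (p := 3) hs
  rw [hc] at this
  exact this

/-- Key lemma: if `X^2 = a^2 + b^2` with `a ≠ 0` and either `b = 0` or
`v(a) < v(b)`, then `v(X) = v(a)`. -/
private lemma v3_key {X a b : ℚ} (hX : X ^ 2 = a ^ 2 + b ^ 2) (ha : a ≠ 0)
    (hb : b = 0 ∨ padicValRat 3 a < padicValRat 3 b) :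
    padicValRat 3 X = padicValRat 3 a := by
  have hs : a ^ 2 + b ^ 2 ≠ 0 := by positivity
  have hX0 : X ≠ 0 := by
    intro h
    rw [h] at hX
    exact hs (by linarith [hX])
  have hval : padicValRat 3 (a ^ 2 + b ^ 2) = 2 * padicValRat 3 a := by
    rcases eq_or_ne b 0 with rfl | hb0
    · have := padicValRat.pow (p := 3) a (k := 2)
      push_cast at this
      simpa using this
    · have hlt := hb.resolve_left hb0
      rw [padicValRat.add_eq_of_lt hs (pow_ne_zero 2 ha) (pow_ne_zero 2 hb0)
        (by rw [padicValRat.pow a, padicValRat.pow b]; push_cast; omega)]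
      have := padicValRat.pow (p := 3) a (k := 2)
      push_cast at this
      exact this
  have h2 := padicValRat.pow (p := 3) X (k := 2)
  rw [hX, hval] at h2
  push_cast at h2
  omega

theorem valuations_of_distances (x y X Y Z T U : ℚ)
    (hxy : (padicValRat 3 x < 0 ∨ padicValRat 3 y < 0) ∧ padicValRat 3 x ≠ padicValRat 3 y)
    (hX : X ^ 2 = x ^ 2 + (y - 1 / 2) ^ 2)
    (hU : U ^ 2 = x ^ 2 + (y + 1 / 2) ^ 2)
    (hY : Y ^ 2 = (x - 1) ^ 2 + (y - 1 / 2) ^ 2)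
    (hZ : Z ^ 2 = (x - 1) ^ 2 + (y + 1 / 2) ^ 2)
    (hT : T = 1) :
    padicValRat 3 X = min (padicValRat 3 x) (padicValRat 3 y) ∧
    padicValRat 3 Y = min (padicValRat 3 x) (padicValRat 3 y) ∧
    padicValRat 3 Z = min (padicValRat 3 x) (padicValRat 3 y) ∧
    padicValRat 3 U = min (padicValRat 3 x) (padicValRat 3 y) ∧
    min (padicValRat 3 x) (padicValRat 3 y) < padicValRat 3 T := by
  obtain ⟨h1, hne⟩ := hxy
  have hm2 : padicValRat 3 (-(1/2) : ℚ) = 0 := v3_zero_of_cases _ (Or.inl rfl)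
  have hp2 : padicValRat 3 ((1/2) : ℚ) = 0 := v3_zero_of_cases _ (Or.inr (Or.inl rfl))
  have hm1 : padicValRat 3 (-1 : ℚ) = 0 := v3_zero_of_cases _ (Or.inr (Or.inr rfl))
  have hT0 : padicValRat 3 T = 0 := by rw [hT]; simp
  rcases lt_or_gt_of_ne hne with hlt | hlt
  · -- v(x) < v(y), hence v(x) < 0
    have hvx : padicValRat 3 x < 0 := by rcases h1 with h | h; exact h; omega
    have hmin : min (padicValRat 3 x) (padicValRat 3 y) = padicValRat 3 x :=
      min_eq_left hlt.le
    have hx0 : x ≠ 0 := by rintro rfl; simp [padicValRat.zero] at hvx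
    have hx1 : padicValRat 3 (x - 1) = padicValRat 3 x := by
      rw [show x - 1 = x + (-1) by ring]; exact v3_shift hm1 hvx
    have hx1' : x - 1 ≠ 0 := by
      intro h; rw [h] at hx1; simp [padicValRat.zero] at hx1; omega
    have hsidem : y - 1/2 = 0 ∨ padicValRat 3 x < padicValRat 3 (y - 1/2) := by
      rcases eq_or_ne (y - 1/2) 0 with h | h
      · exact Or.inl h
      · have hge := v3_shift_ge hm2 (show y + (-(1/2)) ≠ 0 by
          intro hh; exact h (by linarith))
        rw [show y + (-(1/2)) = y - 1/2 by ring] at hge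
        exact Or.inr (by omega)
    have hsidep : y + 1/2 = 0 ∨ padicValRat 3 x < padicValRat 3 (y + 1/2) := by
      rcases eq_or_ne (y + 1/2) 0 with h | h
      · exact Or.inl h
      · have hge := v3_shift_ge hp2 (show y + (1/2) ≠ 0 from h)
        exact Or.inr (by omega)
    rw [hmin]
    refine ⟨?_, ?_, ?_, ?_, by omega⟩
    · exact v3_key (a := x) (b := y - 1/2) hX hx0 hsidem
    · have := v3_key (X := Y) (a := x - 1) (b := y - 1/2) hY hx1'
        (by rw [hx1]; exact hsidem)
      rw [this, hx1]
    · have := v3_key (X := Z) (a := x - 1) (b := y + 1/2) hZ hx1'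
        (by rw [hx1]; exact hsidep)
      rw [this, hx1]
    · exact v3_key (a := x) (b := y + 1/2) hU hx0 hsidep
  · -- v(y) < v(x), hence v(y) < 0
    have hvy : padicValRat 3 y < 0 := by rcases h1 with h | h; omega; exact h
    have hmin : min (padicValRat 3 x) (padicValRat 3 y) = padicValRat 3 y :=
      min_eq_right hlt.le
    have hym : padicValRat 3 (y - 1/2) = padicValRat 3 y := by
      rw [show y - 1/2 = y + (-(1/2)) by ring]; exact v3_shift hm2 hvy
    have hyp : padicValRat 3 (y + 1/2) = padicValRat 3 y := v3_shift hp2 hvy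
    have hym0 : y - 1/2 ≠ 0 := by
      intro h; rw [h] at hym; simp [padicValRat.zero] at hym; omega
    have hyp0 : y + 1/2 ≠ 0 := by
      intro h; rw [h] at hyp; simp [padicValRat.zero] at hyp; omega
    have hxside : x = 0 ∨ padicValRat 3 y < padicValRat 3 x := by
      rcases eq_or_ne x 0 with h | h
      · exact Or.inl h
      · exact Or.inr hlt
    have hx1side : x - 1 = 0 ∨ padicValRat 3 y < padicValRat 3 (x - 1) := by
      rcases eq_or_ne (x - 1) 0 with h | h
      · exact Or.inl h
      · have hge := v3_shift_ge hm1 (show x + (-1) ≠ 0 by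
          intro hh; exact h (by linarith))
        rw [show x + (-1) = x - 1 by ring] at hge
        exact Or.inr (by omega)
    rw [hmin]
    refine ⟨?_, ?_, ?_, ?_, by omega⟩
    · have := v3_key (X := X) (a := y - 1/2) (b := x)
        (by rw [hX]; ring) hym0 (by rw [hym]; exact hxside)
      rw [this, hym]
    · have := v3_key (X := Y) (a := y - 1/2) (b := x - 1)
        (by rw [hY]; ring) hym0 (by rw [hym]; exact hx1side)
      rw [this, hym]
    · have := v3_key (X := Z) (a := y + 1/2) (b := x - 1)
        (by rw [hZ]; ring) hyp0 (by rw [hyp]; exact hx1side)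
      rw [this, hyp]
    · have := v3_key (X := U) (a := y + 1/2) (b := x)
        (by rw [hU]; ring) hyp0 (by rw [hyp]; exact hxside)
      rw [this, hyp]
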